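/- In the graph 𝒢(v0), the distance from v0 (in the first copy) to any vertex of V ⊔ V' is at most 2·Diam(G) + 1; equivalently, the eccentricity of v0 in 𝒢(v0) is at most 2·Diam(G) + 1. -/

import Mathlib

open SimpleGraph Sum

variable {V : Type*}

/-- The bipartite double construction `𝒢(v0)` of `G` with respect to `v0`: two copies of `V`;
every non-cross edge of `G` is kept inside each copy, and every cross edge `{u,w}`
(i.e. `d(v0,u) = d(v0,w)`) is replaced by the two edges `{u,w′}` and `{u′,w}` between the copies. -/
def doubleCover (G : SimpleGraph V) (v0 : V) : SimpleGraph (V ⊕ V) where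
  Adj x y :=
    match x, y with
    | inl u, inl w => G.Adj u w ∧ G.dist v0 u ≠ G.dist v0 w
    | inr u, inr w => G.Adj u w ∧ G.dist v0 u ≠ G.dist v0 w
    | inl u, inr w => G.Adj u w ∧ G.dist v0 u = G.dist v0 w
    | inr u, inl w => G.Adj u w ∧ G.dist v0 u = G.dist v0 w
  symm := ⟨by
    rintro (u|u) (w|w) ⟨h1, h2⟩ <;> exact ⟨h1.symm, by omega⟩⟩
  loopless := ⟨by
    rintro (u|u) ⟨h, _⟩ <;> exact G.ne_of_adj h rfl⟩

/-- Place a vertex in the copy determined by a boolean side. -/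
def sd : Bool → V → V ⊕ V
  | false, v => inl v
  | true, v => inr v

/-- Parity of the number of cross edges along a walk. -/
noncomputable def par (G : SimpleGraph V) (v0 : V) {x y : V} (q : G.Walk x y) : Bool :=
  (q.darts.map (fun d => decide (G.dist v0 d.fst = G.dist v0 d.snd))).foldr xor false

@[simp] lemma par_nil (G : SimpleGraph V) (v0 x : V) :
    par G v0 (SimpleGraph.Walk.nil : G.Walk x x) = false := rfl

@[simp] lemma par_cons (G : SimpleGraph V) (v0 : V) {x z y : V} (h : G.Adj x z)
    (q : G.Walk z y) :
    par G v0 (SimpleGraph.Walk.cons h q) =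
      ((decide (G.dist v0 x = G.dist v0 z)) ^^ par G v0 q) := rfl

lemma doubleCover_adj_sd (G : SimpleGraph V) (v0 : V) {x z : V} (h : G.Adj x z) (s : Bool) :
    (doubleCover G v0).Adj (sd s x) (sd (s ^^ decide (G.dist v0 x = G.dist v0 z)) z) := by
  by_cases hd : G.dist v0 x = G.dist v0 z <;> cases s <;>
    simp [sd, doubleCover, hd, h]

/-- Lifting a walk of `G` to the double cover, starting from a prescribed side. -/
lemma doubleCover_lift (G : SimpleGraph V) (v0 : V) :
    ∀ {x y : V} (q : G.Walk x y) (s : Bool),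
      ∃ W : (doubleCover G v0).Walk (sd s x) (sd (s ^^ par G v0 q) y), W.length = q.length := by
  intro x y q
  induction q with
  | nil =>
    intro s
    exact ⟨SimpleGraph.Walk.nil.copy rfl (by simp), by rw [SimpleGraph.Walk.length_copy]; rfl⟩
  | @cons a b c h q ih =>
    intro s
    obtain ⟨W, hW⟩ := ih (s ^^ decide (G.dist v0 a = G.dist v0 b))
    rw [par_cons, ← Bool.xor_assoc]
    exact ⟨SimpleGraph.Walk.cons (doubleCover_adj_sd G v0 h s) W, by simp [hW]⟩

/-- From `v0` one can reach `inl u` (and `inr v0` can reach `inr u`) inside one copy,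
with a walk of length `G.dist v0 u`. -/
lemma doubleCover_reach_inl (G : SimpleGraph V) (hG : G.Connected) (v0 : V) :
    ∀ (n : ℕ) (u : V), G.dist v0 u = n →
      ∃ W : (doubleCover G v0).Walk (inl v0) (inl u), W.length = n := by
  intro n
  induction n with
  | zero =>
    intro u hu
    have : v0 = u := (hG.dist_eq_zero_iff).mp hu
    subst this
    exact ⟨SimpleGraph.Walk.nil, rfl⟩
  | succ n ih =>
    intro u hu
    -- find a neighbor of u at distance n from v0
    obtain ⟨p, hp⟩ := (hG v0 u).exists_walk_length_eq_dist
    obtain ⟨w, hadj, hw⟩ : ∃ w, G.Adj w u ∧ G.dist v0 w = n := by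
      -- look at the reversed walk
      obtain ⟨w, hadj, q, hq⟩ := SimpleGraph.Walk.not_nil_iff.mp
        (show ¬ p.reverse.Nil by
          rw [SimpleGraph.Walk.not_nil_iff_lt_length, SimpleGraph.Walk.length_reverse, hp, hu]
          omega)
      refine ⟨w, hadj.symm, ?_⟩
      have hqlen : q.length = n := by
        have : p.reverse.length = n + 1 := by simp [hp, hu]
        rw [hq] at this
        simpa using this
      have h1 : G.dist v0 w ≤ n := by
        have := SimpleGraph.dist_le q.reverse
        simpa [hqlen] using this
      have h3 : G.dist w u ≤ 1 := by
        simpa using SimpleGraph.dist_le (SimpleGraph.Walk.cons hadj.symm .nil)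
      have h2 : G.dist v0 u ≤ G.dist v0 w + 1 := by
        calc G.dist v0 u ≤ G.dist v0 w + G.dist w u := hG.dist_triangle
          _ ≤ G.dist v0 w + 1 := by omega
      omega
    obtain ⟨W, hW⟩ := ih w hw
    have hne : G.dist v0 w ≠ G.dist v0 u := by omega
    have hadj' : (doubleCover G v0).Adj (inl w) (inl u) := ⟨hadj, hne⟩
    exact ⟨W.append (SimpleGraph.Walk.cons hadj' .nil), by simp [hW]⟩

/-- If a walk in the double cover changes sides, the graph has a cross edge. -/
lemma doubleCover_cross_of_walk (G : SimpleGraph V) (v0 : V) :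
    ∀ {x y : V ⊕ V} (_ : (doubleCover G v0).Walk x y), x.isLeft ≠ y.isLeft →
      ∃ a b, G.Adj a b ∧ G.dist v0 a = G.dist v0 b := by
  intro x y W
  induction W with
  | nil => intro h; exact absurd rfl h
  | @cons m c _ hadj _ ih =>
    intro h
    by_cases hmc : m.isLeft = c.isLeft
    · exact ih (fun hc => h (hmc.trans hc))
    · rcases m with a | a <;> rcases c with b | b <;> simp at hmc
      · exact ⟨a, b, hadj⟩
      · exact ⟨a, b, hadj⟩

/-- Every vertex of `𝒢(v0)` is at distance at most `2·Diam(G) + 1` from (the first copy of)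
`v0`; i.e. the eccentricity of `v0` in `𝒢(v0)` is at most `2·Diam(G) + 1`. -/
theorem doubleCover_eccentricity [Fintype V] (G : SimpleGraph V) (hG : G.Connected) (v0 : V)
    (x : V ⊕ V) :
    (doubleCover G v0).dist (inl v0) x ≤ 2 * G.diam + 1 := by
  have : Nonempty V := ⟨v0⟩
  have hED : G.ediam ≠ ⊤ := by
    obtain ⟨u, v, huv⟩ := SimpleGraph.exists_edist_eq_ediam_of_finite (G := G)
    rw [← huv]
    exact SimpleGraph.edist_ne_top_iff_reachable.mpr (hG u v)
  have hdiam : ∀ u v : V, G.dist u v ≤ G.diam := fun u v => SimpleGraph.dist_le_diam hED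
  rcases x with u | u
  · -- first copy: lift a shortest walk
    obtain ⟨W, hW⟩ := doubleCover_reach_inl G hG v0 (G.dist v0 u) u rfl
    have h1 := SimpleGraph.dist_le W
    have h2 := hdiam v0 u
    omega
  · -- second copy
    by_cases hreach : (doubleCover G v0).Reachable (inl v0) (inr u)
    · -- there is a cross edge
      obtain ⟨W0⟩ := hreach
      obtain ⟨a, b, hab, hd⟩ := doubleCover_cross_of_walk G v0 W0 (by simp)
      obtain ⟨Q, hQ⟩ := (hG b u).exists_walk_length_eq_dist
      rcases hpar : par G v0 Q with _ | _
      · -- even parity: go v0 → a, cross to b, then lift Q on the right copy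
        obtain ⟨Wa, hWa⟩ := doubleCover_reach_inl G hG v0 (G.dist v0 a) a rfl
        obtain ⟨WQ, hWQ⟩ := doubleCover_lift G v0 Q true
        have hcross : (doubleCover G v0).Adj (inl a) (inr b) := ⟨hab, hd⟩
        have := SimpleGraph.dist_le (Wa.append (SimpleGraph.Walk.cons hcross
          ((WQ.copy (by rfl) (by rw [hpar]; rfl) : (doubleCover G v0).Walk (inr b) (inr u)))))
        simp only [SimpleGraph.Walk.length_append, SimpleGraph.Walk.length_cons,
          SimpleGraph.Walk.length_copy] at this
        erw [SimpleGraph.Walk.length_copy] at this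
        have h1 := hdiam v0 a
        have h2 := hdiam b u
        omega
      · -- odd parity: go v0 → b on the left copy, then lift Q (it crosses)
        obtain ⟨Wb, hWb⟩ := doubleCover_reach_inl G hG v0 (G.dist v0 b) b rfl
        obtain ⟨WQ, hWQ⟩ := doubleCover_lift G v0 Q false
        have := SimpleGraph.dist_le (Wb.append (WQ.copy (by rfl) (by rw [hpar]; rfl) : (doubleCover G v0).Walk (inl b) (inr u)))
        simp only [SimpleGraph.Walk.length_append, SimpleGraph.Walk.length_copy] at this
        erw [SimpleGraph.Walk.length_copy] at this
        have h1 := hdiam v0 b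
        have h2 := hdiam b u
        omega
    · rw [SimpleGraph.dist_eq_zero_of_not_reachable hreach]
      omega
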